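/- arXiv:2602.10466 — 7 statements merged into one kernel-verified Lean document; each statement's English description precedes it below -/
import Mathlib

section
/- For natural numbers m and n, if m ≡ n (mod 2^k), then the sequence of parities of the iterates T^0, T^1, ..., T^{k-1} applied to m agrees with that applied to n; that is, for all j < k, T^j(m) ≡ T^j(n) (mod 2). -/
/-- The modified Collatz function. -/
def T (n : ℕ) : ℕ := if n % 2 = 0 then n / 2 else (3 * n + 1) / 2

private lemma cancel2 {p x y : ℕ} (h : (2 * x) % (2 * p) = (2 * y) % (2 * p)) :
    x % p = y % p := by
  rw [Nat.mul_mod_mul_left, Nat.mul_mod_mul_left] at h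
  omega

private lemma T_step {k : ℕ} {m n : ℕ} (h : m % 2 ^ (k + 1) = n % 2 ^ (k + 1)) :
    T m % 2 ^ k = T n % 2 ^ k := by
  have hd : (2:ℕ) ∣ 2 ^ (k+1) := ⟨2 ^ k, by ring⟩
  have hpar : m % 2 = n % 2 := by
    calc m % 2 = m % 2 ^ (k+1) % 2 := (Nat.mod_mod_of_dvd m hd).symm
      _ = n % 2 ^ (k+1) % 2 := by rw [h]
      _ = n % 2 := Nat.mod_mod_of_dvd n hd
  have h2 : (2 : ℕ) ^ (k + 1) = 2 * 2 ^ k := by ring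
  unfold T
  rcases Nat.even_or_odd m with ⟨a, ha⟩ | ⟨a, ha⟩
  · have hm2 : m % 2 = 0 := by omega
    have hn2 : n % 2 = 0 := by omega
    obtain ⟨b, hb⟩ : 2 ∣ n := by omega
    rw [if_pos hm2, if_pos hn2]
    subst ha hb
    rw [h2] at h
    have := cancel2 (p := 2 ^ k) (x := a) (y := b) (by rw [show a + a = 2 * a by ring] at h; linarith [h])
    simpa [Nat.mul_div_cancel_left, show a + a = 2 * a by ring] using this
  · have hm2 : m % 2 = 1 := by omega
    have hn2 : n % 2 = 1 := by omega
    obtain ⟨b, hb⟩ : ∃ b, n = 2 * b + 1 := ⟨n / 2, by omega⟩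
    rw [if_neg (by omega), if_neg (by omega)]
    subst ha hb
    have h3 : (3 * (2 * a + 1) + 1) % 2 ^ (k + 1) = (3 * (2 * b + 1) + 1) % 2 ^ (k + 1) :=
      Nat.ModEq.add_right 1 (Nat.ModEq.mul_left 3 h)
    have e1 : 3 * (2 * a + 1) + 1 = 2 * (3 * a + 2) := by ring
    have e2 : 3 * (2 * b + 1) + 1 = 2 * (3 * b + 2) := by ring
    rw [e1, e2, h2] at h3
    have := cancel2 h3
    rw [e1, e2]
    simpa [Nat.mul_div_cancel_left] using this

theorem parity_sequence_of_congruent (k : ℕ) (m n : ℕ)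
    (h : m % 2 ^ k = n % 2 ^ k) :
    ∀ j < k, (T^[j] m) % 2 = (T^[j] n) % 2 := by
  induction k generalizing m n with
  | zero => intro j hj; omega
  | succ k ih =>
    intro j hj
    cases j with
    | zero =>
      simp only [Function.iterate_zero, id]
      have := congrArg (· % 2) h
      have hd : (2:ℕ) ∣ 2 ^ (k+1) := ⟨2 ^ k, by ring⟩
      calc m % 2 = m % 2 ^ (k+1) % 2 := (Nat.mod_mod_of_dvd m hd).symm
        _ = n % 2 ^ (k+1) % 2 := by rw [h]
        _ = n % 2 := Nat.mod_mod_of_dvd n hd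
    | succ j =>
      have := ih (T m) (T n) (T_step h) j (by omega)
      simpa [Function.iterate_succ_apply] using this
end

section
/- Let n = n0 + a·2^k for naturals n0, a, k, and let f = f_k(n0) be the number of odd integers among n0, T(n0), ..., T^{k-1}(n0). Then T^k(n) = T^k(n0) + 3^f · a. -/
/-- `f k m` is the number of indices `0 ≤ j < k` with `T^[j] m` odd. -/
def f (k m : ℕ) : ℕ := ((Finset.range k).filter (fun j => Odd (T^[j] m))).card

lemma T_step_s1 (m b : ℕ) : T (m + 2 * b) = T m + (if m % 2 = 0 then b else 3 * b) := by
  unfold T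
  rcases Nat.even_or_odd m with h | h
  · have : m % 2 = 0 := Nat.even_iff.mp h
    simp [this, Nat.add_mul_mod_self_left, Nat.even_iff.mp h]
    omega
  · have hm : m % 2 = 1 := Nat.odd_iff.mp h
    simp [hm]
    omega

lemma f_succ (k m : ℕ) :
    f (k + 1) m = f k m + (if Odd (T^[k] m) then 1 else 0) := by
  unfold f
  rw [Finset.range_add_one, Finset.filter_insert]
  split
  all_goals simp_all [Finset.card_insert_of_notMem]

theorem iterate_add_multiple_pow (n0 a k : ℕ) :
    T^[k] (n0 + a * 2 ^ k) = T^[k] n0 + 3 ^ (f k n0) * a := by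
  induction k generalizing a with
  | zero => simp [f]
  | succ k ih =>
    have h1 : n0 + a * 2 ^ (k + 1) = n0 + (2 * a) * 2 ^ k := by ring
    rw [h1, Function.iterate_succ_apply', Function.iterate_succ_apply', ih (2*a),
      show T^[k] n0 + 3 ^ f k n0 * (2 * a) = T^[k] n0 + 2 * (3 ^ f k n0 * a) by ring,
      T_step_s1, f_succ]
    rcases Nat.even_or_odd (T^[k] n0) with h | h
    · have h2 : T^[k] n0 % 2 = 0 := Nat.even_iff.mp h
      simp [h2, Nat.not_odd_iff_even.mpr h]
    · have h2 : T^[k] n0 % 2 = 1 := Nat.odd_iff.mp h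
      simp [h2, h, pow_succ]
      ring
end

section
/- Suppose n1 = n0 + a·2^k with a ≥ 0 and n0 ≥ 1, and suppose T^k(n0) < n0. Then T^k(n1) < n1. -/
lemma T_key (k : ℕ) : ∀ n a : ℕ, ∃ j : ℕ,
    T^[k] (n + a * 2 ^ k) = T^[k] n + a * 3 ^ j ∧ 3 ^ j * n ≤ 2 ^ k * T^[k] n := by
  induction k with
  | zero => intro n a; exact ⟨0, by simp⟩
  | succ k ih =>
    intro n a
    rw [Function.iterate_succ_apply, Function.iterate_succ_apply]
    rcases Nat.even_or_odd n with he | ho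
    · have hmod : n % 2 = 0 := Nat.even_iff.mp he
      have hT : T n = n / 2 := by simp [T, hmod]
      have hb : a * 2 ^ (k + 1) = 2 * (a * 2 ^ k) := by ring
      have hT2 : T (n + a * 2 ^ (k + 1)) = n / 2 + a * 2 ^ k := by
        rw [hb]
        have hmod2 : (n + 2 * (a * 2 ^ k)) % 2 = 0 := by omega
        simp only [T, hmod2, if_pos]
        omega
      rw [hT2, hT]
      obtain ⟨j, hj1, hj2⟩ := ih (n / 2) a
      refine ⟨j, hj1, ?_⟩
      have h2 : 2 * (n / 2) = n := by omega
      calc 3 ^ j * n = 3 ^ j * (2 * (n / 2)) := by rw [h2]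
        _ = 2 * (3 ^ j * (n / 2)) := by ring
        _ ≤ 2 * (2 ^ k * T^[k] (n / 2)) := by omega
        _ = 2 ^ (k + 1) * T^[k] (n / 2) := by ring
    · have hmod : n % 2 = 1 := Nat.odd_iff.mp ho
      have hT : T n = (3 * n + 1) / 2 := by simp [T, hmod]
      have hb : a * 2 ^ (k + 1) = 2 * (a * 2 ^ k) := by ring
      have hT2 : T (n + a * 2 ^ (k + 1)) = (3 * n + 1) / 2 + 3 * a * 2 ^ k := by
        rw [hb]
        have hmod2 : (n + 2 * (a * 2 ^ k)) % 2 = 1 := by omega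
        simp only [T, hmod2]
        norm_num
        have h3a : 3 * a * 2 ^ k = 3 * (a * 2 ^ k) := by ring
        rw [h3a]; omega
      rw [hT2, hT]
      obtain ⟨j, hj1, hj2⟩ := ih ((3 * n + 1) / 2) (3 * a)
      refine ⟨j + 1, ?_, ?_⟩
      · rw [hj1]; ring_nf
      · have h2 : 2 * ((3 * n + 1) / 2) = 3 * n + 1 := by omega
        calc 3 ^ (j + 1) * n = 3 ^ j * (3 * n) := by ring
          _ ≤ 3 ^ j * (3 * n + 1) := by nlinarith [pow_pos (by norm_num : (0:ℕ) < 3) j]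
          _ = 3 ^ j * (2 * ((3 * n + 1) / 2)) := by rw [h2]
          _ = 2 * (3 ^ j * ((3 * n + 1) / 2)) := by ring
          _ ≤ 2 * (2 ^ k * T^[k] ((3 * n + 1) / 2)) := by omega
          _ = 2 ^ (k + 1) * T^[k] ((3 * n + 1) / 2) := by ring

theorem descent_sieve (n0 n1 a k : ℕ) (hn0 : 1 ≤ n0)
    (h1 : n1 = n0 + a * 2 ^ k) (h : T^[k] n0 < n0) :
    T^[k] n1 < n1 := by
  obtain ⟨j, hj1, hj2⟩ := T_key k n0 a
  rw [h1, hj1]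
  have h3 : 3 ^ j * n0 < 2 ^ k * n0 := lt_of_le_of_lt hj2 (by
    have hp : 0 < 2 ^ k := Nat.pow_pos (by norm_num)
    exact (mul_lt_mul_iff_right₀ hp).mpr h)
  have h4 : 3 ^ j ≤ 2 ^ k := by
    by_contra hc
    push_neg at hc
    have := Nat.mul_le_mul_right n0 (le_of_lt hc)
    omega
  have := Nat.mul_le_mul_left a h4
  omega
end

section
/- Suppose n0 ≤ n1 are positive integers with n0 ≡ n1 (mod 2^k). Then for every 0 ≤ ℓ ≤ k, T^ℓ(n0) ≤ T^ℓ(n1), and moreover T^k(n1)·n0 ≤ T^k(n0)·n1 (i.e., the ratio T^k(n)/n is non-increasing along congruent starting points). -/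
lemma T_even (m : ℕ) : T (2 * m) = m := by
  simp [T, Nat.mul_div_cancel_left m two_pos]

lemma T_odd (m : ℕ) : T (2 * m + 1) = 3 * m + 2 := by
  have h : (2 * m + 1) % 2 = 1 := by omega
  simp only [T, h]
  norm_num
  omega

lemma key : ∀ k n0 d : ℕ, 1 ≤ n0 →
    ∃ a, T^[k] (n0 + 2 ^ k * d) = T^[k] n0 + 3 ^ a * d ∧
      3 ^ a * n0 ≤ 2 ^ k * T^[k] n0 := by
  intro k
  induction k with
  | zero => intro n0 d h; exact ⟨0, by simp⟩
  | succ k ih =>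
    intro n0 d h
    rcases Nat.even_or_odd n0 with ⟨m, hm⟩ | ⟨m, hm⟩
    · -- even: n0 = 2m
      have hm' : n0 = 2 * m := by omega
      subst hm'
      have hm1 : 1 ≤ m := by omega
      have h1 : 2 * m + 2 ^ (k + 1) * d = 2 * (m + 2 ^ k * d) := by ring
      obtain ⟨a, ha1, ha2⟩ := ih m d hm1
      refine ⟨a, ?_, ?_⟩
      · rw [h1, Function.iterate_succ_apply, Function.iterate_succ_apply,
          T_even, T_even, ha1]
      · calc 3 ^ a * (2 * m) = 2 * (3 ^ a * m) := by ring
          _ ≤ 2 * (2 ^ k * T^[k] m) := by omega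
          _ = 2 ^ (k + 1) * T^[k+1] (2 * m) := by
              rw [Function.iterate_succ_apply, T_even]; ring
    · -- odd: n0 = 2m+1
      subst hm
      have h1 : 2 * m + 1 + 2 ^ (k + 1) * d = 2 * (m + 2 ^ k * d) + 1 := by ring
      have hTm : 1 ≤ 3 * m + 2 := by omega
      obtain ⟨a, ha1, ha2⟩ := ih (3 * m + 2) (3 * d) hTm
      refine ⟨a + 1, ?_, ?_⟩
      · rw [h1, Function.iterate_succ_apply, Function.iterate_succ_apply,
          T_odd, T_odd]
        have h2 : 3 * (m + 2 ^ k * d) + 2 = 3 * m + 2 + 2 ^ k * (3 * d) := by ring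
        rw [h2, ha1]
        ring
      · have h3 : T^[k+1] (2 * m + 1) = T^[k] (3 * m + 2) := by
          rw [Function.iterate_succ_apply, T_odd]
        rw [h3]
        calc 3 ^ (a + 1) * (2 * m + 1) = 3 ^ a * (6 * m + 3) := by ring
          _ ≤ 3 ^ a * (2 * (3 * m + 2)) := by
              exact Nat.mul_le_mul_left _ (by omega)
          _ = 2 * (3 ^ a * (3 * m + 2)) := by ring
          _ ≤ 2 * (2 ^ k * T^[k] (3 * m + 2)) := by omega
          _ = 2 ^ (k + 1) * T^[k] (3 * m + 2) := by ring

theorem ratio_nonincreasing (k n0 n1 : ℕ) (h0 : 1 ≤ n0) (h01 : n0 ≤ n1)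
    (hc : n0 % 2 ^ k = n1 % 2 ^ k) :
    (∀ l ≤ k, T^[l] n0 ≤ T^[l] n1) ∧
    T^[k] n1 * n0 ≤ T^[k] n0 * n1 := by
  have hdvd : 2 ^ k ∣ n1 - n0 :=
    (Nat.modEq_iff_dvd' h01).mp hc
  constructor
  · intro l hl
    have hdvdl : 2 ^ l ∣ n1 - n0 := dvd_trans (pow_dvd_pow 2 hl) hdvd
    obtain ⟨d, hd⟩ := hdvdl
    have hn1 : n1 = n0 + 2 ^ l * d := by omega
    obtain ⟨a, ha1, _⟩ := key l n0 d h0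
    rw [hn1, ha1]
    omega
  · obtain ⟨d, hd⟩ := hdvd
    have hn1 : n1 = n0 + 2 ^ k * d := by omega
    obtain ⟨a, ha1, ha2⟩ := key k n0 d h0
    rw [hn1, ha1]
    have : 3 ^ a * n0 * d ≤ 2 ^ k * T^[k] n0 * d := Nat.mul_le_mul_right d ha2
    nlinarith [this]
end

section
/- Let n be a positive integer and k ≥ 1 with f_k(n) ≥ 1 (at least one odd step occurs among the first k iterates of T). Let j < k be the largest index with T^j(n) odd. Then T^k(n) ≡ 2 (mod 3) if and only if k − 1 − j is even. -/
theorem mod_three_from_last_odd_step (n k j : ℕ) (hn : 1 ≤ n) (hk : 1 ≤ k)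
    (hj : j < k) (hodd : Odd (T^[j] n))
    (hlast : ∀ i, j < i → i < k → ¬ Odd (T^[i] n)) :
    T^[k] n % 3 = 2 ↔ Even (k - 1 - j) := by
  have key : ∀ d, j + 1 + d ≤ k →
      T^[j + 1 + d] n % 3 = if d % 2 = 0 then 2 else 1 := by
    intro d
    induction d with
    | zero =>
      intro _
      have h1 : j + 1 + 0 = j + 1 := by omega
      rw [h1, Function.iterate_succ_apply']
      rw [Nat.odd_iff] at hodd
      simp only [T, hodd]
      norm_num
      omega
    | succ d ih =>
      intro hle
      have h1 := ih (by omega)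
      have heven : ¬ Odd (T^[j + 1 + d] n) := hlast _ (by omega) (by omega)
      rw [Nat.not_odd_iff_even, Nat.even_iff] at heven
      have h2 : j + 1 + (d + 1) = (j + 1 + d) + 1 := by omega
      rw [h2, Function.iterate_succ_apply']
      simp only [T, heven]
      norm_num
      rcases eq_or_ne (d % 2) 0 with hd | hd
      · rw [if_pos hd] at h1
        rw [if_neg (by omega : ¬ (d + 1) % 2 = 0)]
        omega
      · rw [if_neg hd] at h1
        rw [if_pos (by omega : (d + 1) % 2 = 0)]
        omega
  have h := key (k - j - 1) (by omega)
  have h1 : j + 1 + (k - j - 1) = k := by omega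
  rw [h1] at h
  have h2 : k - 1 - j = k - j - 1 := by omega
  rw [h2, Nat.even_iff]
  split at h <;> omega
end

section
/- For every natural number M ≥ 1, the map from Z/2^M to (Z/2)^M sending n to the sequence of parities (T^0(n) mod 2, T^1(n) mod 2, ..., T^{M−1}(n) mod 2) is a bijection. -/
lemma parity_key (k : ℕ) : ∀ n m : ℕ,
    (∀ i < k, T^[i] n % 2 = T^[i] m % 2) → n ≡ m [MOD 2 ^ k] := by
  induction k with
  | zero => intro n m _; simp [Nat.ModEq, Nat.mod_one]
  | succ k ih =>
    intro n m h
    have h0 : n % 2 = m % 2 := by simpa using h 0 (by omega)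
    have hT : T n ≡ T m [MOD 2 ^ k] := by
      refine ih _ _ (fun i hi => ?_)
      have := h (i + 1) (by omega)
      simpa [Function.iterate_succ_apply] using this
    have hpow : (2 : ℕ) ^ (k + 1) = 2 * 2 ^ k := by ring
    rcases Nat.even_or_odd n with he | ho
    · have hn2 : n % 2 = 0 := Nat.even_iff.mp he
      have hm2 : m % 2 = 0 := h0 ▸ hn2
      have hTn : T n = n / 2 := by simp [T, hn2]
      have hTm : T m = m / 2 := by simp [T, hm2]
      rw [hTn, hTm] at hT
      have := Nat.ModEq.mul_left' (c := 2) hT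
      rw [Nat.mul_div_cancel' (Nat.dvd_of_mod_eq_zero hn2),
        Nat.mul_div_cancel' (Nat.dvd_of_mod_eq_zero hm2)] at this
      rwa [hpow]
    · have hn2 : n % 2 = 1 := Nat.odd_iff.mp ho
      have hm2 : m % 2 = 1 := h0 ▸ hn2
      have hTn : T n = (3 * n + 1) / 2 := by simp [T, hn2]
      have hTm : T m = (3 * m + 1) / 2 := by simp [T, hm2]
      rw [hTn, hTm] at hT
      have hdn : 2 ∣ 3 * n + 1 := by omega
      have hdm : 2 ∣ 3 * m + 1 := by omega
      have h1 := Nat.ModEq.mul_left' (c := 2) hT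
      rw [Nat.mul_div_cancel' hdn, Nat.mul_div_cancel' hdm] at h1
      have h2 : 3 * n ≡ 3 * m [MOD 2 * 2 ^ k] := Nat.ModEq.add_right_cancel' 1 h1
      have hco : Nat.Coprime 3 (2 * 2 ^ k) :=
        Nat.Coprime.mul_right (by decide) (Nat.Coprime.pow_right _ (by decide))
      have := Nat.ModEq.cancel_left_of_coprime hco.symm h2
      rwa [hpow]

theorem parity_sequence_bijective (M : ℕ) (hM : 1 ≤ M) :
    Function.Bijective
      (fun n : ZMod (2 ^ M) => fun i : Fin M =>
        ((T^[(i : ℕ)] n.val) % 2 : ZMod 2)) := by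
  haveI : NeZero (2 ^ M) := ⟨pow_ne_zero _ two_ne_zero⟩
  rw [Fintype.bijective_iff_injective_and_card]
  constructor
  · intro a b hab
    have hmod : a.val ≡ b.val [MOD 2 ^ M] := by
      refine parity_key M _ _ (fun i hi => ?_)
      have h20 : (2 : ZMod 2) = 0 := by decide
      have hmodtwo : ∀ z : ZMod 2, z % 2 = z := fun z => by
        rw [h20, EuclideanDomain.mod_zero]
      have h := congrFun hab ⟨i, hi⟩
      simp only [hmodtwo] at h
      have := (ZMod.natCast_eq_natCast_iff _ _ _).mp h
      exact this
    have h1 : a.val = b.val := by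
      have := hmod
      rwa [Nat.ModEq, Nat.mod_eq_of_lt (ZMod.val_lt a),
        Nat.mod_eq_of_lt (ZMod.val_lt b)] at this
    exact ZMod.val_injective _ h1
  · simp [ZMod.card]
end

section
/- Suppose m = T^k(n) for some k, m ≡ 2 (mod 3), and (2m−1)/3 < n. Then the trajectory of n under T meets the trajectory of a positive integer strictly smaller than n; explicitly, T^{k}(n) = T((2m−1)/3) with (2m−1)/3 < n. -/
theorem path_merging_sieve (n k m : ℕ) (hn : 1 ≤ n)
    (hm : m = T^[k] n) (h3 : m % 3 = 2) (hlt : 2 * m - 1 < 3 * n) :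
    ∃ p : ℕ, 0 < p ∧ 3 * p = 2 * m - 1 ∧ p < n ∧ T p = T^[k] n := by
  refine ⟨(2 * m - 1) / 3, ?_, ?_, ?_, ?_⟩ <;> try omega
  have h : 3 * ((2 * m - 1) / 3) = 2 * m - 1 := by omega
  have hodd : (2 * m - 1) / 3 % 2 = 1 := by omega
  rw [← hm]; simp only [T, hodd, one_ne_zero, if_false]
  omega
end
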